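/- Let G be an infinite, locally finite, connected, claw-free graph, X a finite vertex set such that G[X] is connected, and 𝔖 ⊆ V(G) a finite vertex set, disjoint from X, that is minimal (under inclusion) with the property that every ray starting in X meets 𝔖. Then G − 𝔖 has exactly one finite component K₀; this component contains all of X, and every vertex of 𝔖 has a neighbour in K₀. -/

import Mathlib

open SimpleGraph

/-- The claw `K_{1,3}`: vertex `0` is the centre, adjacent to `1`, `2`, `3`. -/
def claw : SimpleGraph (Fin 4) := SimpleGraph.fromRel (fun a _ => a = 0)

/-- The paw: a triangle on `1, 2, 3` with pendant vertex `0` attached to `1`. -/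
def paw : SimpleGraph (Fin 4) :=
  SimpleGraph.fromRel (fun a b => (a = 0 ∧ b = 1) ∨ (a ≠ 0 ∧ b ≠ 0))

/-- `G` is `H`-free: no induced subgraph of `G` is isomorphic to `H`.
(`H ↪g G` is a graph embedding, i.e. an isomorphism onto an induced subgraph.) -/
def HFree {W V : Type*} (H : SimpleGraph W) (G : SimpleGraph V) : Prop :=
  ¬ Nonempty (H ↪g G)

/-- `G` is 2-connected: at least 3 vertices, connected, and deleting any vertex
leaves it connected. -/
def TwoConnected {V : Type*} (G : SimpleGraph V) : Prop :=
  (∃ a b c : V, a ≠ b ∧ a ≠ c ∧ b ≠ c) ∧ G.Connected ∧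
    ∀ v : V, (G.induce {u | u ≠ v}).Connected

/-- The hypothesis that every induced paw of `G`, with pendant vertex `a₁` adjacent
precisely to the triangle vertex `a₀`, satisfies `φ(a₁,b₁)` or `φ(a₁,b₂)`:
`a₁` has a common neighbour outside the paw with `b₁` or with `b₂`. -/
def PawCondition {V : Type*} (G : SimpleGraph V) : Prop :=
  ∀ a₁ a₀ b₁ b₂ : V,
    G.Adj a₁ a₀ → G.Adj a₀ b₁ → G.Adj a₀ b₂ → G.Adj b₁ b₂ →
    ¬ G.Adj a₁ b₁ → ¬ G.Adj a₁ b₂ → a₁ ≠ b₁ → a₁ ≠ b₂ →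
    ∃ x, x ∉ ({a₁, a₀, b₁, b₂} : Set V) ∧ G.Adj x a₁ ∧ (G.Adj x b₁ ∨ G.Adj x b₂)

/-- A ray (one-way infinite path) in `G`, given by its sequence of vertices. -/
def IsRay {V : Type*} (G : SimpleGraph V) (f : ℕ → V) : Prop :=
  Function.Injective f ∧ ∀ n, G.Adj (f n) (f (n + 1))

/-- Two rays are equivalent (belong to the same end) if no finite vertex set
separates them. -/
def EndEquiv {V : Type*} (G : SimpleGraph V) (f g : ℕ → V) : Prop :=
  ∀ S : Set V, S.Finite →
    ∃ (m n : ℕ) (p : G.Walk (f m) (g n)), ∀ x ∈ p.support, x ∉ S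

/-- The ends of `G`, as equivalence classes of rays. -/
def Ends {V : Type*} (G : SimpleGraph V) : Type _ :=
  Quot (fun f g : {f : ℕ → V // IsRay G f} => EndEquiv G f.1 g.1)

/-- The edge cut `δ(X)`. -/
def edgeCut {V : Type*} (G : SimpleGraph V) (X : Set V) : Set (Sym2 V) :=
  {e | e ∈ G.edgeSet ∧ ∃ a b, e = s(a, b) ∧ a ∈ X ∧ b ∉ X}

/-- `G` has a Hamilton circle in its Freudenthal compactification `|G|`,
expressed combinatorially: there is a spanning edge set `C` in which every
vertex has degree exactly `2` and which meets every finite cut of `G` in a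
positive even number of edges (for locally finite connected `G` this
characterises edge sets whose closure in `|G|` is a circle through all
vertices). -/
def HasHamiltonCircle {V : Type*} (G : SimpleGraph V) : Prop :=
  ∃ C ⊆ G.edgeSet, (∀ v : V, {e ∈ C | v ∈ e}.ncard = 2) ∧
    ∀ X : Set V, X.Nonempty → Xᶜ.Nonempty → (edgeCut G X).Finite →
      (C ∩ edgeCut G X).Nonempty ∧ Even ((C ∩ edgeCut G X).ncard)

/-- The end represented by the ray `g` lies in the closure (in `|G|`) of the
vertex set `M`: for every finite `S`, the component of `G - S` containing a
tail of `g` meets `M`. -/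
def EndInClosure {V : Type*} (G : SimpleGraph V) (g : ℕ → V) (M : Set V) : Prop :=
  ∀ S : Set V, S.Finite → ∃ u ∈ M, ∃ N : ℕ, ∀ n ≥ N,
    ∃ p : G.Walk u (g n), ∀ x ∈ p.support, x ∉ S

/-- `S` is a vertex separator of `G`: `G - S` is disconnected. -/
def IsSeparator {V : Type*} (G : SimpleGraph V) (S : Set V) : Prop :=
  ∃ (u : V) (hu : u ∉ S) (v : V) (hv : v ∉ S),
    ¬ (G.induce {x | x ∉ S}).Reachable ⟨u, hu⟩ ⟨v, hv⟩

/-- `S` is a minimal vertex separator of `G`. -/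
def IsMinSeparator {V : Type*} (G : SimpleGraph V) (S : Set V) : Prop :=
  IsSeparator G S ∧ ∀ T ⊂ S, ¬ IsSeparator G T

/-- The `k`-blow-up of `G`: each vertex is replaced by a `k`-clique. -/
def blowup {V : Type*} (G : SimpleGraph V) (k : ℕ) : SimpleGraph (V × Fin k) where
  Adj x y := (x.1 = y.1 ∧ x.2 ≠ y.2) ∨ G.Adj x.1 y.1
  symm := by
    constructor
    rintro x y (⟨h1, h2⟩ | h)
    · exact Or.inl ⟨h1.symm, h2.symm⟩
    · exact Or.inr h.symm
  loopless := by
    constructor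
    rintro x (⟨_, h⟩ | h)
    · exact h rfl
    · exact G.irrefl h

open SimpleGraph

/-- Vertices reachable from `v` by a walk avoiding `F`. -/
def ReachAvoid {W : Type*} (H : SimpleGraph W) (F : Set W) (v : W) : Set W :=
  {w | ∃ p : H.Walk v w, ∀ x ∈ p.support, x ∉ F}

lemma reach_step {W : Type*} (H : SimpleGraph W) (hlf : ∀ v, (H.neighborSet v).Finite)
    {F : Set W} {v : W} (hF : F.Finite) (hinf : (ReachAvoid H F v).Infinite) :
    ∃ u, H.Adj v u ∧ u ∉ F ∧ (ReachAvoid H (insert v F) u).Infinite := by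
  classical
  by_contra hcon
  push_neg at hcon
  have hsub : ReachAvoid H F v ⊆
      insert v (⋃ u ∈ (H.neighborSet v \ F), ReachAvoid H (insert v F) u) := by
    rintro w ⟨p, hp⟩
    by_cases hw : w = v
    · subst hw; exact Set.mem_insert _ _
    obtain ⟨r, hrpath, hrsup⟩ : ∃ r : H.Walk v w, r.IsPath ∧ ∀ x ∈ r.support, x ∉ F :=
      ⟨p.toPath, p.toPath.2, fun x hx => hp x (p.support_toPath_subset hx)⟩
    cases r with
    | nil => exact absurd rfl hw
    | @cons _ u _ h r' =>
      rw [SimpleGraph.Walk.cons_isPath_iff] at hrpath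
      refine Set.mem_insert_iff.mpr (Or.inr ?_)
      simp only [Set.mem_iUnion, exists_prop]
      refine ⟨u, ⟨h, hrsup u (by simp [SimpleGraph.Walk.support_cons,
        SimpleGraph.Walk.start_mem_support])⟩, r', ?_⟩
      intro x hx
      rw [Set.mem_insert_iff]
      push_neg
      exact ⟨fun e => hrpath.2 (e ▸ hx),
        hrsup x (by simp [SimpleGraph.Walk.support_cons, hx])⟩
  apply hinf
  refine (Set.Finite.insert v (Set.Finite.biUnion ((hlf v).diff : (H.neighborSet v \ F).Finite) ?_)).subset hsub
  rintro u ⟨hadj, huF⟩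
  exact hcon u hadj huF

lemma exists_ray_aux {W : Type*} (H : SimpleGraph W) (hlf : ∀ v, (H.neighborSet v).Finite)
    (v₀ : W) (h : (ReachAvoid H ∅ v₀).Infinite) :
    ∃ f : ℕ → W, f 0 = v₀ ∧ Function.Injective f ∧ ∀ n, H.Adj (f n) (f (n + 1)) := by
  classical
  let S := {p : W × Set W // p.2.Finite ∧ (ReachAvoid H p.2 p.1).Infinite}
  have step : ∀ s : S, ∃ t : S, H.Adj s.1.1 t.1.1 ∧ t.1.2 = insert s.1.1 s.1.2 := by
    rintro ⟨⟨v, F⟩, hF, hinf⟩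
    obtain ⟨u, hadj, huF, huinf⟩ := reach_step H hlf hF hinf
    exact ⟨⟨(u, insert v F), hF.insert v, huinf⟩, hadj, rfl⟩
  let nxt : S → S := fun s => (step s).choose
  have hnxt1 : ∀ s : S, H.Adj s.1.1 (nxt s).1.1 := fun s => (step s).choose_spec.1
  have hnxt2 : ∀ s : S, (nxt s).1.2 = insert s.1.1 s.1.2 := fun s => (step s).choose_spec.2
  let s0 : S := ⟨(v₀, ∅), Set.finite_empty, h⟩
  let g : ℕ → S := fun n => nxt^[n] s0
  have hg : ∀ n, g (n + 1) = nxt (g n) := fun n => Function.iterate_succ_apply' nxt n s0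
  let f : ℕ → W := fun n => (g n).1.1
  let Fs : ℕ → Set W := fun n => (g n).1.2
  have hFsucc : ∀ n, Fs (n + 1) = insert (f n) (Fs n) := fun n => by
    show (g (n+1)).1.2 = _; rw [hg]; exact hnxt2 (g n)
  have hadj : ∀ n, H.Adj (f n) (f (n + 1)) := fun n => by
    show H.Adj (g n).1.1 (g (n+1)).1.1; rw [hg]; exact hnxt1 (g n)
  have hmono : ∀ n, Fs n ⊆ Fs (n + 1) := fun n => by
    rw [hFsucc]; exact Set.subset_insert _ _
  have hmem : ∀ m n, m < n → f m ∈ Fs n := by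
    intro m n hmn
    induction n with
    | zero => omega
    | succ k ih =>
      rcases Nat.lt_succ_iff_lt_or_eq.mp hmn with h' | h'
      · exact hmono k (ih h')
      · subst h'; rw [hFsucc]; exact Set.mem_insert _ _
  have hnotmem : ∀ n, f n ∉ Fs n := by
    intro n hmem'
    obtain ⟨w, p, hp⟩ := (g n).2.2.nonempty
    exact hp (f n) p.start_mem_support hmem'
  have hne : ∀ m n, m < n → f m ≠ f n := fun m n hmn e =>
    hnotmem n (e ▸ hmem m n hmn)
  refine ⟨f, rfl, ?_, hadj⟩
  intro a b hab
  rcases lt_trichotomy a b with h' | h' | h'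
  · exact absurd hab (hne a b h')
  · exact h'
  · exact absurd hab.symm (hne b a h')

lemma chain_reachable {V : Type*} (G : SimpleGraph V) {A : Set V} (g : ℕ → V)
    (hadj : ∀ n, G.Adj (g n) (g (n + 1))) (a : ℕ) :
    ∀ b, a ≤ b → ∀ (hmem : ∀ i, a ≤ i → i ≤ b → g i ∈ A) (ha : g a ∈ A) (hb : g b ∈ A),
      (G.induce A).Reachable ⟨g a, ha⟩ ⟨g b, hb⟩ := by
  intro b
  induction b with
  | zero => intro hab _ _ _; obtain rfl : a = 0 := Nat.le_zero.mp hab; rfl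
  | succ k ih =>
    intro hab hmem ha hb
    rcases Nat.le_succ_iff_eq_or_le.mp hab with h' | h'
    · subst h'; rfl
    · have hk : g k ∈ A := hmem k h' (Nat.le_succ k)
      refine (ih h' (fun i h1 h2 => hmem i h1 (h2.trans (Nat.le_succ k))) ha hk).trans ?_
      exact SimpleGraph.Adj.reachable (by exact hadj k : G.Adj (g k) (g (k+1)))

/-- if `𝔖` is an `X`-umbrella (a finite set disjoint from the finite
connected set `X`, minimal such that every ray starting in `X` meets it), then `G − 𝔖`
has exactly one finite component `K₀`; `K₀` contains `X` and every vertex of `𝔖` has a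
neighbour in `K₀`. -/
theorem stmt_11 {V : Type} [Infinite V] (G : SimpleGraph V)
    (hlf : ∀ v : V, (G.neighborSet v).Finite) (hconn : G.Connected)
    (hclaw : HFree claw G) (X : Set V) (hX : X.Finite) (hXne : X.Nonempty)
    (hXconn : (G.induce X).Connected) (𝔖 : Set V) (h𝔖fin : 𝔖.Finite)
    (hdisj : Disjoint X 𝔖)
    (hmeets : ∀ f : ℕ → V, IsRay G f → f 0 ∈ X → ∃ n, f n ∈ 𝔖)
    (hmin : ∀ T ⊂ 𝔖, ¬ ∀ f : ℕ → V, IsRay G f → f 0 ∈ X → ∃ n, f n ∈ T) :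
    ∃ K₀ : (G.induce {x | x ∉ 𝔖}).ConnectedComponent,
      K₀.supp.Finite ∧
      (∀ K : (G.induce {x | x ∉ 𝔖}).ConnectedComponent, K.supp.Finite → K = K₀) ∧
      (∀ x ∈ X, ∃ hx : x ∉ 𝔖,
        (G.induce {x | x ∉ 𝔖}).connectedComponentMk ⟨x, hx⟩ = K₀) ∧
      (∀ s ∈ 𝔖, ∃ y, G.Adj s y ∧ ∃ hy : y ∉ 𝔖,
        (G.induce {x | x ∉ 𝔖}).connectedComponentMk ⟨y, hy⟩ = K₀) := by
  classical
  set A : Set V := {x | x ∉ 𝔖} with hA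
  set H : SimpleGraph A := G.induce A with hH
  have hlfH : ∀ v : A, (H.neighborSet v).Finite := by
    intro v
    apply Set.Finite.of_finite_image (f := Subtype.val) ?_ Subtype.val_injective.injOn
    apply (hlf v.1).subset
    rintro _ ⟨u, hu, rfl⟩
    exact hu
  obtain ⟨x₀, hx₀X⟩ := hXne
  have hXA : X ⊆ A := fun x hx => Set.disjoint_left.mp hdisj hx
  set K₀ : H.ConnectedComponent := H.connectedComponentMk ⟨x₀, hXA hx₀X⟩ with hK₀
  -- all of X lies in K₀
  have hXK : ∀ (x : V) (hx : x ∈ A), x ∈ X → H.connectedComponentMk ⟨x, hx⟩ = K₀ := by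
    intro x hx hxX
    apply SimpleGraph.ConnectedComponent.sound
    have hr : (G.induce X).Reachable ⟨x, hxX⟩ ⟨x₀, hx₀X⟩ := hXconn.preconnected _ _
    exact hr.map (⟨fun a => ⟨a.1, hXA a.2⟩, fun {a b} hab => hab⟩ : G.induce X →g H)
  -- any ray within A starting in X is impossible
  have hnoray : ∀ f : ℕ → A, Function.Injective f → (∀ n, H.Adj (f n) (f (n+1))) →
      (f 0 : V) ∈ X → False := by
    intro f hinj hadj hf0
    have hray : IsRay G (fun n => (f n : V)) :=
      ⟨fun a b hab => hinj (Subtype.ext hab), fun n => hadj n⟩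
    obtain ⟨n, hn⟩ := hmeets _ hray hf0
    exact (f n).2 hn
  -- components with a vertex linked to X by a chain... K₀ is finite
  have hK₀fin : K₀.supp.Finite := by
    rw [← Set.not_infinite]
    intro hinf
    have hsub : K₀.supp ⊆ ReachAvoid H ∅ ⟨x₀, hXA hx₀X⟩ := by
      intro w hw
      rw [SimpleGraph.ConnectedComponent.mem_supp_iff, hK₀,
        SimpleGraph.ConnectedComponent.eq] at hw
      obtain ⟨p⟩ := hw.symm
      exact ⟨p, by simp⟩
    obtain ⟨f, hf0, hfinj, hfadj⟩ := exists_ray_aux H hlfH _ (hinf.mono hsub)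
    exact hnoray f hfinj hfadj (by rw [hf0]; exact hx₀X)
  -- key: every s ∈ 𝔖 has a neighbour in K₀ and a neighbour in an infinite component
  have hS : ∀ s ∈ 𝔖, ∃ (b c : V) (hb : b ∈ A) (hc : c ∈ A),
      G.Adj s b ∧ G.Adj s c ∧ H.connectedComponentMk ⟨b, hb⟩ = K₀ ∧
        (H.connectedComponentMk ⟨c, hc⟩).supp.Infinite := by
    intro s hs
    have hT := hmin (𝔖 \ {s}) (Set.sdiff_singleton_ssubset.mpr hs)
    push_neg at hT
    obtain ⟨f, hray, hf0, hfT⟩ := hT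
    obtain ⟨n, hn⟩ := hmeets f hray hf0
    have hfn : f n = s := by
      have h1 := hfT n
      simp only [Set.mem_diff, Set.mem_singleton_iff] at h1
      by_contra hne
      exact h1 ⟨hn, hne⟩
    have hother : ∀ m, m ≠ n → f m ∈ A := by
      intro m hm hm𝔖
      have h1 := hfT m
      simp only [Set.mem_diff, Set.mem_singleton_iff] at h1
      have he : f m = s := by by_contra hne; exact h1 ⟨hm𝔖, hne⟩
      exact hm (hray.1 (he.trans hfn.symm))
    have hn0 : n ≠ 0 := by
      intro e
      subst e
      exact Set.disjoint_left.mp hdisj hf0 (by rw [hfn]; exact hs)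
    obtain ⟨k, rfl⟩ : ∃ k, n = k + 1 := ⟨n - 1, by omega⟩
    have hbA : f k ∈ A := hother k (by omega)
    have hcA : f (k + 2) ∈ A := hother (k + 2) (by omega)
    have hf0A : f 0 ∈ A := hother 0 (by omega)
    refine ⟨f k, f (k + 2), hbA, hcA, ?_, ?_, ?_, ?_⟩
    · have h1 := (hray.2 k).symm
      rw [hfn] at h1
      exact h1
    · have h1 := hray.2 (k + 1)
      rw [hfn] at h1
      exact h1
    · have hr := chain_reachable G f hray.2 0 k (Nat.zero_le k)
        (fun i _ hik => hother i (by omega)) hf0A hbA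
      have he : H.connectedComponentMk ⟨f k, hbA⟩ = H.connectedComponentMk ⟨f 0, hf0A⟩ :=
        SimpleGraph.ConnectedComponent.sound hr.symm
      rw [he]
      exact hXK (f 0) hf0A hf0
    · apply Set.infinite_of_injective_forall_mem
        (f := fun m : ℕ => (⟨f (k + 2 + m), hother (k + 2 + m) (by omega)⟩ : A))
      · intro a b hab
        have := hray.1 (congrArg Subtype.val hab)
        omega
      · intro m
        rw [SimpleGraph.ConnectedComponent.mem_supp_iff]
        apply SimpleGraph.ConnectedComponent.sound
        exact (chain_reachable G f hray.2 (k + 2) (k + 2 + m) (by omega)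
          (fun i h1 h2 => hother i (by omega)) hcA _).symm
  refine ⟨K₀, hK₀fin, ?_, fun x hx => ⟨hXA hx, hXK x (hXA hx) hx⟩,
    fun s hs => ?_⟩
  · -- uniqueness of finite component
    intro K hKfin
    by_contra hne
    obtain ⟨v, hv⟩ := K.exists_rep
    have hvK : v ∈ K.supp := by rw [SimpleGraph.ConnectedComponent.mem_supp_iff]; exact hv
    have hfin : (Subtype.val '' K.supp ∪ 𝔖).Finite := (hKfin.image _).union h𝔖fin
    obtain ⟨z, hz⟩ := hfin.infinite_compl.nonempty
    obtain ⟨p⟩ := hconn.preconnected v.1 z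
    have hzK : z ∉ Subtype.val '' K.supp := fun h => hz (Set.mem_union_left _ h)
    obtain ⟨d, _, hdf, hds⟩ := p.exists_boundary_dart (Subtype.val '' K.supp) ⟨v, hvK, rfl⟩ hzK
    obtain ⟨u, huK, hueq⟩ := hdf
    rw [SimpleGraph.ConnectedComponent.mem_supp_iff] at huK
    have hsadj : G.Adj u.1 d.snd := by rw [hueq]; exact d.adj
    have hs𝔖 : d.snd ∈ 𝔖 := by
      by_contra hns
      apply hds
      refine ⟨⟨d.snd, hns⟩, ?_, rfl⟩
      rw [SimpleGraph.ConnectedComponent.mem_supp_iff, ← huK]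
      exact SimpleGraph.ConnectedComponent.sound
        (SimpleGraph.Adj.reachable (by exact hsadj : H.Adj u ⟨d.snd, hns⟩)).symm
    obtain ⟨b, c, hbA, hcA, hsb, hsc, hbK, hcInf⟩ := hS d.snd hs𝔖
    -- non-adjacency from distinct components
    have nonadj : ∀ (y w : V) (hy : y ∈ A) (hw : w ∈ A),
        H.connectedComponentMk ⟨y, hy⟩ ≠ H.connectedComponentMk ⟨w, hw⟩ →
        ¬ G.Adj y w ∧ y ≠ w := by
      intro y w hy hw hne'
      refine ⟨fun hadj' => hne' (SimpleGraph.ConnectedComponent.sound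
        (SimpleGraph.Adj.reachable (by exact hadj' : H.Adj ⟨y, hy⟩ ⟨w, hw⟩))), ?_⟩
      intro e
      subst e
      exact hne' rfl
    have hcompa : H.connectedComponentMk ⟨u.1, u.2⟩ = K := huK
    have hab := nonadj u.1 b u.2 hbA (by
      rw [hcompa, hbK]; exact hne)
    have hac := nonadj u.1 c u.2 hcA (by
      rw [hcompa]
      intro e
      rw [← e] at hcInf
      exact (Set.not_infinite.mpr hKfin) hcInf)
    have hbc := nonadj b c hbA hcA (by
      rw [hbK]
      intro e
      rw [← e] at hcInf
      exact (Set.not_infinite.mpr hK₀fin) hcInf)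
    have hsa' : d.snd ≠ u.1 := fun e => u.2 (by rw [← e]; exact hs𝔖)
    have hsb' : d.snd ≠ b := fun e => hbA (by rw [← e]; exact hs𝔖)
    have hsc' : d.snd ≠ c := fun e => hcA (by rw [← e]; exact hs𝔖)
    have h1 : G.Adj d.snd u.1 := hsadj.symm
    apply hclaw
    refine ⟨⟨⟨![d.snd, u.1, b, c], ?_⟩, ?_⟩⟩
    · intro i j hij
      fin_cases i <;> fin_cases j <;>
        simp only [Matrix.cons_val_zero, Matrix.cons_val_one, Matrix.head_cons,
          Matrix.cons_val_two, Matrix.tail_cons, Matrix.cons_val_three,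
          Matrix.cons_val_fin_one] at hij <;>
        first
          | rfl
          | exact absurd hij hsa' | exact absurd hij hsb' | exact absurd hij hsc'
          | exact absurd hij.symm hsa' | exact absurd hij.symm hsb'
          | exact absurd hij.symm hsc'
          | exact absurd hij hab.2 | exact absurd hij hac.2 | exact absurd hij hbc.2
          | exact absurd hij.symm hab.2 | exact absurd hij.symm hac.2
          | exact absurd hij.symm hbc.2
    · intro i j
      change G.Adj (![d.snd, u.1, b, c] i) (![d.snd, u.1, b, c] j) ↔ claw.Adj i j
      fin_cases i <;> fin_cases j <;>
        simp [claw, SimpleGraph.fromRel_adj, h1, h1.symm, hsb, hsb.symm, hsc, hsc.symm,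
          hab.1, hac.1, hbc.1, SimpleGraph.irrefl,
          show ¬ G.Adj b u.1 from fun h => hab.1 h.symm,
          show ¬ G.Adj c u.1 from fun h => hac.1 h.symm,
          show ¬ G.Adj c b from fun h => hbc.1 h.symm]
  · obtain ⟨b, c, hb, hc, hsb, hsc, hbK, hcInf⟩ := hS s hs
    exact ⟨b, hsb, hb, hbK⟩
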